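/- A unit vector v ∈ H = H₁ ⊗ H₂ ⊗ ⋯ ⊗ Hₙ is hyperentangled if and only if for every i ∈ {1,…,n} the vector v is {i}-cyclic, i.e. {(A ⊗ I)v : A a bounded operator on H_i} is dense in H (where A ⊗ I acts as A on the i-th factor and as the identity on all other factors). -/

import Mathlib

open scoped InnerProductSpace

noncomputable section

/-- The (completed) Hilbert tensor product `H = H₁ ⊗ ⋯ ⊗ Hₙ` of a finite family of complex
Hilbert spaces `Hs i`, presented as a Hilbert space `H` together with a multilinear map
`tmul` (elementary tensors) whose inner products multiply, whose elementary tensors span a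
dense subspace, and together with, for each factor `i`, the embedding
`A ↦ A ⊗ (identity on the other factors)` of the bounded operators on `Hs i`. -/
structure MultiTensor (ι : Type*) [Fintype ι] [DecidableEq ι] (Hs : ι → Type*) (H : Type*)
    [∀ i, NormedAddCommGroup (Hs i)] [∀ i, InnerProductSpace ℂ (Hs i)]
    [∀ i, CompleteSpace (Hs i)]
    [NormedAddCommGroup H] [InnerProductSpace ℂ H] [CompleteSpace H] where
  tmul : MultilinearMap ℂ Hs H
  inner_tmul : ∀ x y, ⟪tmul x, tmul y⟫_ℂ = ∏ i, ⟪x i, y i⟫_ℂ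
  dense_span : Dense (↑(Submodule.span ℂ (Set.range tmul)) : Set H)
  embed : ∀ i, (Hs i →L[ℂ] Hs i) → (H →L[ℂ] H)
  embed_tmul : ∀ i A x, embed i A (tmul x) = tmul (Function.update x i (A (x i)))

variable {ι : Type*} [Fintype ι] [DecidableEq ι] {Hs : ι → Type*} {H : Type*}
    [∀ i, NormedAddCommGroup (Hs i)] [∀ i, InnerProductSpace ℂ (Hs i)]
    [∀ i, CompleteSpace (Hs i)]
    [NormedAddCommGroup H] [InnerProductSpace ℂ H] [CompleteSpace H]

/-- The von Neumann algebra of the subsystem `S`: the double commutant (in the bounded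
operators on `H`) of the operators of the form `A ⊗ I` with `A` a bounded operator on a
factor `Hs i`, `i ∈ S`.  (It consists of the operators `B ⊗ I` with `B` bounded on `H_S`.) -/
def MultiTensor.alg (T : MultiTensor ι Hs H) (S : Set ι) : Set (H →L[ℂ] H) :=
  Set.centralizer (Set.centralizer (⋃ i ∈ S, Set.range (T.embed i)))

/-- An orthogonal projection on a Hilbert space: a self-adjoint idempotent bounded operator. -/
def IsONProj {E : Type*} [NormedAddCommGroup E] [InnerProductSpace ℂ E] [CompleteSpace E]
    (P : E →L[ℂ] E) : Prop :=
  IsSelfAdjoint P ∧ P ∘L P = P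

/-- The algebra of the subsystem `S` is maximally correlated with the algebra of the
subsystem `S'` in the state `v`: for every nonzero orthogonal projection `P'` of the algebra
of `S` and every `ε > 0` there is a nonzero orthogonal projection `P` of the algebra of `S'`
with `⟪v, P v⟫ > 0` and `⟪v, P' P v⟫ ≥ (1 - ε) ⟪v, P v⟫`. -/
def MultiTensor.MaxCorr (T : MultiTensor ι Hs H) (S S' : Set ι) (v : H) : Prop :=
  ∀ P' ∈ T.alg S, IsONProj P' → P' ≠ 0 → ∀ ε : ℝ, 0 < ε →
    ∃ P ∈ T.alg S', IsONProj P ∧ P ≠ 0 ∧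
      0 < (⟪v, P v⟫_ℂ).re ∧
      (1 - ε) * (⟪v, P v⟫_ℂ).re ≤ (⟪v, P' (P v)⟫_ℂ).re

/-- `v` is hyperentangled: for all disjoint nonempty subsystems `S`, `S'` of `{1,…,n}`, the
algebra of `S` is maximally correlated with the algebra of `S'` in `v`. -/
def MultiTensor.Hyper (T : MultiTensor ι Hs H) (v : H) : Prop :=
  ∀ S S' : Set ι, S.Nonempty → S'.Nonempty → Disjoint S S' → T.MaxCorr S S' v



section Aux

set_option linter.unusedSectionVars false

open ContinuousLinearMap

variable (T : MultiTensor ι Hs H)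

/-- Two continuous linear maps agreeing on elementary tensors agree. -/
theorem ext_tmul' {F : Type*} [NormedAddCommGroup F] [NormedSpace ℂ F]
    {f g : H →L[ℂ] F} (h : ∀ x, f (T.tmul x) = g (T.tmul x)) : f = g := by
  have heq : Set.EqOn ⇑f ⇑g (↑(Submodule.span ℂ (Set.range T.tmul))) := by
    intro x hx
    exact LinearMap.eqOn_span (fun y hy => by obtain ⟨x0, rfl⟩ := hy; exact h x0) hx
  ext x
  exact congrFun (Continuous.ext_on T.dense_span f.continuous g.continuous heq) x

theorem prod_update_left (i : ι) (x y : ∀ j, Hs j) (c : Hs i) :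
    (∏ j, ⟪Function.update x i c j, y j⟫_ℂ)
      = ⟪c, y i⟫_ℂ * ∏ j ∈ Finset.univ \ {i}, ⟪x j, y j⟫_ℂ := by
  have h : (fun j => ⟪Function.update x i c j, y j⟫_ℂ)
      = Function.update (fun j => ⟪x j, y j⟫_ℂ) i ⟪c, y i⟫_ℂ := by
    funext j
    by_cases hj : j = i
    · subst hj; simp
    · simp [Function.update_of_ne hj]
  calc (∏ j, ⟪Function.update x i c j, y j⟫_ℂ)
      = ∏ j, Function.update (fun j => ⟪x j, y j⟫_ℂ) i ⟪c, y i⟫_ℂ j := by rw [h]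
    _ = ⟪c, y i⟫_ℂ * ∏ j ∈ Finset.univ \ {i}, ⟪x j, y j⟫_ℂ :=
        Finset.prod_update_of_mem (Finset.mem_univ i) _ _

theorem prod_update_right (i : ι) (x y : ∀ j, Hs j) (c : Hs i) :
    (∏ j, ⟪x j, Function.update y i c j⟫_ℂ)
      = ⟪x i, c⟫_ℂ * ∏ j ∈ Finset.univ \ {i}, ⟪x j, y j⟫_ℂ := by
  have h : (fun j => ⟪x j, Function.update y i c j⟫_ℂ)
      = Function.update (fun j => ⟪x j, y j⟫_ℂ) i ⟪x i, c⟫_ℂ := by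
    funext j
    by_cases hj : j = i
    · subst hj; simp
    · simp [Function.update_of_ne hj]
  calc (∏ j, ⟪x j, Function.update y i c j⟫_ℂ)
      = ∏ j, Function.update (fun j => ⟪x j, y j⟫_ℂ) i ⟪x i, c⟫_ℂ j := by rw [h]
    _ = ⟪x i, c⟫_ℂ * ∏ j ∈ Finset.univ \ {i}, ⟪x j, y j⟫_ℂ :=
        Finset.prod_update_of_mem (Finset.mem_univ i) _ _

theorem embed_id (i : ι) : T.embed i 1 = 1 := by
  apply ext_tmul' T
  intro x
  simp [T.embed_tmul, Function.update_eq_self]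

theorem embed_comp (i : ι) (A B : Hs i →L[ℂ] Hs i) :
    T.embed i A ∘L T.embed i B = T.embed i (A ∘L B) := by
  apply ext_tmul' T
  intro x
  simp only [ContinuousLinearMap.comp_apply, T.embed_tmul, Function.update_self,
    Function.update_idem]

theorem embed_add (i : ι) (A B : Hs i →L[ℂ] Hs i) :
    T.embed i (A + B) = T.embed i A + T.embed i B := by
  apply ext_tmul' T
  intro x
  simp only [T.embed_tmul, ContinuousLinearMap.add_apply]
  rw [← MultilinearMap.map_update_add]

theorem embed_smul (i : ι) (c : ℂ) (A : Hs i →L[ℂ] Hs i) :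
    T.embed i (c • A) = c • T.embed i A := by
  apply ext_tmul' T
  intro x
  simp only [T.embed_tmul, ContinuousLinearMap.smul_apply]
  rw [← MultilinearMap.map_update_smul]

theorem embed_commute {i j : ι} (hij : i ≠ j) (A : Hs i →L[ℂ] Hs i) (B : Hs j →L[ℂ] Hs j) :
    T.embed i A ∘L T.embed j B = T.embed j B ∘L T.embed i A := by
  apply ext_tmul' T
  intro x
  simp only [ContinuousLinearMap.comp_apply, T.embed_tmul]
  rw [Function.update_of_ne hij, Function.update_of_ne (Ne.symm hij),
    Function.update_comm hij]

theorem embed_adjoint (i : ι) (A : Hs i →L[ℂ] Hs i) :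
    adjoint (T.embed i A) = T.embed i (adjoint A) := by
  have key : ∀ x y, ⟪(T.embed i (adjoint A)) x, y⟫_ℂ = ⟪x, (T.embed i A) y⟫_ℂ := by
    -- step 1 : x an elementary tensor
    have step1 : ∀ (w : ∀ j, Hs j) (y : H),
        ⟪(T.embed i (adjoint A)) (T.tmul w), y⟫_ℂ = ⟪T.tmul w, (T.embed i A) y⟫_ℂ := by
      intro w
      have h1 : Continuous fun y : H => ⟪(T.embed i (adjoint A)) (T.tmul w), y⟫_ℂ :=
        (innerSL ℂ ((T.embed i (adjoint A)) (T.tmul w))).continuous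
      have h2 : Continuous fun y : H => ⟪T.tmul w, (T.embed i A) y⟫_ℂ :=
        ((innerSL ℂ (T.tmul w)).comp (T.embed i A)).continuous
      have base : ∀ z : ∀ j, Hs j,
          ⟪(T.embed i (adjoint A)) (T.tmul w), T.tmul z⟫_ℂ
            = ⟪T.tmul w, (T.embed i A) (T.tmul z)⟫_ℂ := by
        intro z
        rw [T.embed_tmul, T.embed_tmul, T.inner_tmul, T.inner_tmul,
          prod_update_left, prod_update_right, ContinuousLinearMap.adjoint_inner_left]
      have heq : Set.EqOn (fun y : H => ⟪(T.embed i (adjoint A)) (T.tmul w), y⟫_ℂ)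
          (fun y : H => ⟪T.tmul w, (T.embed i A) y⟫_ℂ)
          (↑(Submodule.span ℂ (Set.range T.tmul))) := by
        intro y hy
        exact LinearMap.eqOn_span (σ₁₂ := RingHom.id ℂ) (f := (innerSL ℂ ((T.embed i (adjoint A)) (T.tmul w))).toLinearMap)
          (g := ((innerSL ℂ (T.tmul w)).comp (T.embed i A)).toLinearMap)
          (fun y hy => by obtain ⟨z, rfl⟩ := hy; exact base z) hy
      intro y
      exact congrFun (Continuous.ext_on T.dense_span h1 h2 heq) y
    -- step 2 : general x
    intro x y
    have base : ∀ z : ∀ j, Hs j,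
        ⟪y, (T.embed i (adjoint A)) (T.tmul z)⟫_ℂ = ⟪(T.embed i A) y, T.tmul z⟫_ℂ := by
      intro z
      have := step1 z y
      calc ⟪y, (T.embed i (adjoint A)) (T.tmul z)⟫_ℂ
          = starRingEnd ℂ ⟪(T.embed i (adjoint A)) (T.tmul z), y⟫_ℂ := (inner_conj_symm _ _).symm
        _ = starRingEnd ℂ ⟪T.tmul z, (T.embed i A) y⟫_ℂ := by rw [this]
        _ = ⟪(T.embed i A) y, T.tmul z⟫_ℂ := inner_conj_symm _ _
    have h1 : Continuous fun x : H => ⟪y, (T.embed i (adjoint A)) x⟫_ℂ :=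
      ((innerSL ℂ y).comp (T.embed i (adjoint A))).continuous
    have h2 : Continuous fun x : H => ⟪(T.embed i A) y, x⟫_ℂ :=
      (innerSL ℂ ((T.embed i A) y)).continuous
    have heq : Set.EqOn (fun x : H => ⟪y, (T.embed i (adjoint A)) x⟫_ℂ)
        (fun x : H => ⟪(T.embed i A) y, x⟫_ℂ)
        (↑(Submodule.span ℂ (Set.range T.tmul))) := by
      intro x hx
      exact LinearMap.eqOn_span (σ₁₂ := RingHom.id ℂ) (f := ((innerSL ℂ y).comp (T.embed i (adjoint A))).toLinearMap)
        (g := (innerSL ℂ ((T.embed i A) y)).toLinearMap)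
        (fun x hx => by obtain ⟨z, rfl⟩ := hx; exact base z) hx
    have := congrFun (Continuous.ext_on T.dense_span h1 h2 heq) x
    calc ⟪(T.embed i (adjoint A)) x, y⟫_ℂ
        = starRingEnd ℂ ⟪y, (T.embed i (adjoint A)) x⟫_ℂ := (inner_conj_symm _ _).symm
      _ = starRingEnd ℂ ⟪(T.embed i A) y, x⟫_ℂ := by rw [this]
      _ = ⟪x, (T.embed i A) y⟫_ℂ := inner_conj_symm _ _
  exact ((ContinuousLinearMap.eq_adjoint_iff _ _).2 key).symm


/-- The rank one operator `x ↦ ⟪b, x⟫ • a`. -/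
def rkOne {E : Type*} [NormedAddCommGroup E] [InnerProductSpace ℂ E] (a b : E) : E →L[ℂ] E :=
  (innerSL ℂ b).smulRight a

theorem rkOne_apply {E : Type*} [NormedAddCommGroup E] [InnerProductSpace ℂ E] (a b x : E) :
    rkOne a b x = ⟪b, x⟫_ℂ • a := rfl

theorem rkOne_adjoint {E : Type*} [NormedAddCommGroup E] [InnerProductSpace ℂ E]
    [CompleteSpace E] (a b : E) : adjoint (rkOne a b) = rkOne b a := by
  refine ((ContinuousLinearMap.eq_adjoint_iff _ _).2 ?_).symm
  intro x y
  rw [rkOne_apply, rkOne_apply, inner_smul_left, inner_smul_right, inner_conj_symm]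
  ring

theorem rkOne_comp {E : Type*} [NormedAddCommGroup E] [InnerProductSpace ℂ E] (a b c d : E) :
    rkOne a b ∘L rkOne c d = ⟪b, c⟫_ℂ • rkOne a d := by
  ext x
  simp only [ContinuousLinearMap.comp_apply, rkOne_apply, inner_smul_right,
    ContinuousLinearMap.smul_apply, smul_smul]
  ring_nf

theorem rkOne_isONProj {E : Type*} [NormedAddCommGroup E] [InnerProductSpace ℂ E]
    [CompleteSpace E] {e : E} (he : ‖e‖ = 1) : IsONProj (rkOne e e) := by
  have hee : ⟪e, e⟫_ℂ = 1 := by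
    rw [inner_self_eq_norm_sq_to_K, he]; norm_num
  constructor
  · rw [IsSelfAdjoint, ContinuousLinearMap.star_eq_adjoint, rkOne_adjoint]
  · rw [rkOne_comp, hee, one_smul]

theorem IsONProj.inner_self {E : Type*} [NormedAddCommGroup E] [InnerProductSpace ℂ E]
    [CompleteSpace E] {P : E →L[ℂ] E} (hP : IsONProj P) (x : E) :
    ⟪x, P x⟫_ℂ = (‖P x‖ : ℂ) ^ 2 := by
  have hadj : adjoint P = P := by
    rw [← ContinuousLinearMap.star_eq_adjoint]; exact hP.1
  calc ⟪x, P x⟫_ℂ = ⟪x, P (P x)⟫_ℂ := by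
        conv_rhs => rw [← ContinuousLinearMap.comp_apply, hP.2]
    _ = ⟪adjoint P x, P x⟫_ℂ := (ContinuousLinearMap.adjoint_inner_left _ _ _).symm
    _ = ⟪P x, P x⟫_ℂ := by rw [hadj]
    _ = (‖P x‖ : ℂ) ^ 2 := inner_self_eq_norm_sq_to_K _

theorem IsONProj.norm_apply_le {E : Type*} [NormedAddCommGroup E] [InnerProductSpace ℂ E]
    [CompleteSpace E] {P : E →L[ℂ] E} (hP : IsONProj P) (x : E) : ‖P x‖ ≤ ‖x‖ := by
  have h1 : (‖P x‖ : ℝ) ^ 2 = (⟪x, P x⟫_ℂ).re := by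
    rw [hP.inner_self x, ← Complex.ofReal_pow, Complex.ofReal_re]
  have h2 : (⟪x, P x⟫_ℂ).re ≤ ‖x‖ * ‖P x‖ := by
    calc (⟪x, P x⟫_ℂ).re ≤ ‖⟪x, P x⟫_ℂ‖ := Complex.re_le_norm _
      _ ≤ ‖x‖ * ‖P x‖ := norm_inner_le_norm _ _
  nlinarith [norm_nonneg (P x), norm_nonneg x]

section Psi

variable (i : ι) (a : ∀ j, Hs j)

/-- The isometry `x ↦ (tensor with `x` in slot `i` and `a j` in slot `j ≠ i`)`,
for unit vectors `a j`. -/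
def psi (ha : ∀ j, j ≠ i → ‖a j‖ = 1) : Hs i →ₗᵢ[ℂ] H where
  toLinearMap :=
    { toFun := fun x => T.tmul (Function.update a i x)
      map_add' := fun x y => by rw [← MultilinearMap.map_update_add]
      map_smul' := fun c x => by rw [← MultilinearMap.map_update_smul]; rfl }
  norm_map' := by
    intro x
    have hinner : ⟪T.tmul (Function.update a i x), T.tmul (Function.update a i x)⟫_ℂ
        = ⟪x, x⟫_ℂ := by
      rw [T.inner_tmul]
      have h : (fun j => ⟪Function.update a i x j, Function.update a i x j⟫_ℂ)
          = Function.update (fun j => ⟪a j, a j⟫_ℂ) i ⟪x, x⟫_ℂ := by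
        funext j
        by_cases hj : j = i
        · subst hj; simp
        · simp [Function.update_of_ne hj]
      calc (∏ j, ⟪Function.update a i x j, Function.update a i x j⟫_ℂ)
          = ∏ j, Function.update (fun j => ⟪a j, a j⟫_ℂ) i ⟪x, x⟫_ℂ j := by rw [h]
        _ = ⟪x, x⟫_ℂ * ∏ j ∈ Finset.univ \ {i}, ⟪a j, a j⟫_ℂ :=
            Finset.prod_update_of_mem (Finset.mem_univ i) _ _
        _ = ⟪x, x⟫_ℂ := by
            rw [Finset.prod_congr rfl (fun j hj => ?_), Finset.prod_const_one, mul_one]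
            have hji : j ≠ i := by
              rcases Finset.mem_sdiff.1 hj with ⟨_, hj2⟩
              simpa using hj2
            rw [inner_self_eq_norm_sq_to_K, ha j hji]
            norm_num
    show ‖T.tmul (Function.update a i x)‖ = ‖x‖
    have h1 := norm_eq_sqrt_re_inner (𝕜 := ℂ) (T.tmul (Function.update a i x))
    have h2 := norm_eq_sqrt_re_inner (𝕜 := ℂ) x
    rw [h1, h2, hinner]

variable (ha : ∀ j, j ≠ i → ‖a j‖ = 1)

theorem psi_apply (x : Hs i) : psi T i a ha x = T.tmul (Function.update a i x) := rfl

theorem psi_adjoint_psi (x : Hs i) :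
    adjoint (psi T i a ha).toContinuousLinearMap ((psi T i a ha).toContinuousLinearMap x)
      = x := by
  apply ext_inner_left ℂ
  intro t
  rw [ContinuousLinearMap.adjoint_inner_right]
  calc ⟪(psi T i a ha).toContinuousLinearMap t, (psi T i a ha).toContinuousLinearMap x⟫_ℂ
      = ⟪(psi T i a ha) t, (psi T i a ha) x⟫_ℂ := rfl
    _ = ⟪t, x⟫_ℂ := LinearIsometry.inner_map_map _ _ _

theorem psi_adjoint_tmul (y : ∀ j, Hs j) :
    adjoint (psi T i a ha).toContinuousLinearMap (T.tmul y)
      = (∏ j ∈ Finset.univ \ {i}, ⟪a j, y j⟫_ℂ) • y i := by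
  apply ext_inner_left ℂ
  intro t
  rw [ContinuousLinearMap.adjoint_inner_right, inner_smul_right]
  calc ⟪(psi T i a ha).toContinuousLinearMap t, T.tmul y⟫_ℂ
      = ⟪T.tmul (Function.update a i t), T.tmul y⟫_ℂ := rfl
    _ = ∏ j, ⟪Function.update a i t j, y j⟫_ℂ := T.inner_tmul _ _
    _ = ⟪t, y i⟫_ℂ * ∏ j ∈ Finset.univ \ {i}, ⟪a j, y j⟫_ℂ := prod_update_left i a y t
    _ = (∏ j ∈ Finset.univ \ {i}, ⟪a j, y j⟫_ℂ) * ⟪t, y i⟫_ℂ := mul_comm _ _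

theorem embed_psi (A : Hs i →L[ℂ] Hs i) (x : Hs i) :
    T.embed i A ((psi T i a ha) x) = (psi T i a ha) (A x) := by
  rw [psi_apply, psi_apply, T.embed_tmul, Function.update_self, Function.update_idem]

theorem embed_fixed_psi {j : ι} (hj : j ≠ i) (B : Hs j →L[ℂ] Hs j) (hB : B (a j) = a j)
    (x : Hs i) : T.embed j B ((psi T i a ha) x) = (psi T i a ha) x := by
  have h1 : a j = Function.update a i x j := (Function.update_of_ne hj x a).symm
  rw [psi_apply, T.embed_tmul, Function.update_of_ne hj, hB]
  conv_lhs => rw [h1, Function.update_eq_self]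

end Psi


section Commutant

variable (i : ι) (a : ∀ j, Hs j)

theorem inner_embed_sa {j : ι} {B : Hs j →L[ℂ] Hs j} (hB : adjoint B = B) (u x : H) :
    ⟪u, T.embed j B x⟫_ℂ = ⟪T.embed j B u, x⟫_ℂ := by
  have h : T.embed j B u = adjoint (T.embed j B) u := by
    rw [embed_adjoint, hB]
  rw [h, ContinuousLinearMap.adjoint_inner_left]

/-- If `x` is fixed by all the projections onto the unit vectors `a j`, `j ≠ i`, then
`x` is in the range of `psi T i a`. -/
theorem psi_psi_adjoint_of_fixed (ha : ∀ j, j ≠ i → ‖a j‖ = 1) (x : H)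
    (hx : ∀ j, j ≠ i → T.embed j (rkOne (a j) (a j)) x = x) :
    (psi T i a ha).toContinuousLinearMap
      (adjoint (psi T i a ha).toContinuousLinearMap x) = x := by
  set ψ := (psi T i a ha).toContinuousLinearMap with hψ
  -- single step
  have step : ∀ (y : ∀ j, Hs j) (j : ι), j ≠ i →
      ⟪T.tmul y, x⟫_ℂ = (starRingEnd ℂ) ⟪a j, y j⟫_ℂ *
        ⟪T.tmul (Function.update y j (a j)), x⟫_ℂ := by
    intro y j hj
    have hadj : adjoint (rkOne (a j) (a j)) = rkOne (a j) (a j) := rkOne_adjoint _ _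
    calc ⟪T.tmul y, x⟫_ℂ = ⟪T.tmul y, T.embed j (rkOne (a j) (a j)) x⟫_ℂ := by
          rw [hx j hj]
      _ = ⟪T.embed j (rkOne (a j) (a j)) (T.tmul y), x⟫_ℂ := inner_embed_sa T hadj _ _
      _ = ⟪(⟪a j, y j⟫_ℂ) • T.tmul (Function.update y j (a j)), x⟫_ℂ := by
          rw [T.embed_tmul, rkOne_apply, ← MultilinearMap.map_update_smul]
      _ = (starRingEnd ℂ) ⟪a j, y j⟫_ℂ * ⟪T.tmul (Function.update y j (a j)), x⟫_ℂ :=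
          inner_smul_left _ _ _
  -- iterated step
  have iter : ∀ F : Finset ι, i ∉ F → ∀ y : ∀ j, Hs j,
      ⟪T.tmul y, x⟫_ℂ = (starRingEnd ℂ) (∏ j ∈ F, ⟪a j, y j⟫_ℂ) *
        ⟪T.tmul (fun j => if j ∈ F then a j else y j), x⟫_ℂ := by
    intro F
    induction F using Finset.induction_on with
    | empty => intro _ y; simp
    | @insert k F hkF ih =>
      intro hi y
      have hki : k ≠ i := fun h => hi (by rw [h]; exact Finset.mem_insert_self i F)
      have hiF : i ∉ F := fun h => hi (Finset.mem_insert_of_mem h)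
      have ihy := ih hiF y
      set y' : ∀ j, Hs j := fun j => if j ∈ F then a j else y j with hy'
      have hy'k : y' k = y k := by simp [hy', hkF]
      have hupd : Function.update y' k (a k) =
          fun j => if j ∈ insert k F then a j else y j := by
        funext j
        by_cases hjk : j = k
        · subst hjk; simp
        · rw [Function.update_of_ne hjk]
          by_cases hjF : j ∈ F
          · simp [hy', hjF, Finset.mem_insert_of_mem hjF]
          · have : j ∉ insert k F := by
              simp [Finset.mem_insert, hjk, hjF]
            simp [hy', hjF, this]
      have hstep := step y' k hki
      rw [hy'k, hupd] at hstep
      rw [ihy, hstep, Finset.prod_insert hkF, map_mul]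
      ring
  -- conclude by density
  have main : ∀ y : ∀ j, Hs j, ⟪T.tmul y, ψ (adjoint ψ x)⟫_ℂ = ⟪T.tmul y, x⟫_ℂ := by
    intro y
    have h1 : ⟪ψ (adjoint ψ x), T.tmul y⟫_ℂ = ⟪adjoint ψ x, adjoint ψ (T.tmul y)⟫_ℂ := by
      rw [← ContinuousLinearMap.adjoint_inner_right]
    have h2 : adjoint ψ (T.tmul y) = (∏ j ∈ Finset.univ \ {i}, ⟪a j, y j⟫_ℂ) • y i :=
      psi_adjoint_tmul T i a ha y
    have h3 : (fun j => if j ∈ Finset.univ \ {i} then a j else y j) =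
        Function.update a i (y i) := by
      funext j
      by_cases hj : j = i
      · subst hj; simp
      · simp [Finset.mem_sdiff, hj, Function.update_of_ne hj]
    have h4 : ⟪T.tmul y, x⟫_ℂ = (starRingEnd ℂ) (∏ j ∈ Finset.univ \ {i}, ⟪a j, y j⟫_ℂ) *
        ⟪T.tmul (Function.update a i (y i)), x⟫_ℂ := by
      have := iter (Finset.univ \ {i}) (by simp) y
      rwa [h3] at this
    have h5 : ⟪T.tmul y, ψ (adjoint ψ x)⟫_ℂ
        = (starRingEnd ℂ) (∏ j ∈ Finset.univ \ {i}, ⟪a j, y j⟫_ℂ) *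
          ⟪T.tmul (Function.update a i (y i)), x⟫_ℂ := by
      calc ⟪T.tmul y, ψ (adjoint ψ x)⟫_ℂ
          = ⟪adjoint ψ (T.tmul y), adjoint ψ x⟫_ℂ :=
            (ContinuousLinearMap.adjoint_inner_left ψ (adjoint ψ x) (T.tmul y)).symm
        _ = ⟪(∏ j ∈ Finset.univ \ {i}, ⟪a j, y j⟫_ℂ) • y i, adjoint ψ x⟫_ℂ := by rw [h2]
        _ = (starRingEnd ℂ) (∏ j ∈ Finset.univ \ {i}, ⟪a j, y j⟫_ℂ) *
              ⟪y i, adjoint ψ x⟫_ℂ := inner_smul_left _ _ _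
        _ = (starRingEnd ℂ) (∏ j ∈ Finset.univ \ {i}, ⟪a j, y j⟫_ℂ) *
              ⟪ψ (y i), x⟫_ℂ := by
            rw [ContinuousLinearMap.adjoint_inner_right ψ (y i) x]
        _ = (starRingEnd ℂ) (∏ j ∈ Finset.univ \ {i}, ⟪a j, y j⟫_ℂ) *
              ⟪T.tmul (Function.update a i (y i)), x⟫_ℂ := rfl
    rw [h4, h5]
  -- from `main` to the statement, by density
  have hfun : innerSL ℂ (ψ (adjoint ψ x)) = innerSL ℂ x := by
    apply ext_tmul' T
    intro y
    simp only [innerSL_apply_apply]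
    show ⟪ψ (adjoint ψ x), T.tmul y⟫_ℂ = ⟪x, T.tmul y⟫_ℂ
    rw [← inner_conj_symm, main y, inner_conj_symm]
  apply ext_inner_left ℂ
  intro w
  rw [← inner_conj_symm, ← inner_conj_symm w x]
  have := congrFun (congrArg (fun (f : H →L[ℂ] ℂ) => ⇑f) hfun) w
  simp only [innerSL_apply_apply] at this
  rw [show ⟪ψ (adjoint ψ x), w⟫_ℂ = ⟪x, w⟫_ℂ from this]

theorem psi_fixed (ha : ∀ j, j ≠ i → ‖a j‖ = 1) {j : ι} (hj : j ≠ i) (x : Hs i) :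
    T.embed j (rkOne (a j) (a j)) ((psi T i a ha) x) = (psi T i a ha) x := by
  refine embed_fixed_psi T i a ha hj _ ?_ x
  rw [rkOne_apply, inner_self_eq_norm_sq_to_K, ha j hj]
  norm_num

end Commutant


section BigOpSec

theorem commute_of_comp {f g : H →L[ℂ] H} (h : f ∘L g = g ∘L f) : Commute f g := by
  show f * g = g * f
  ext x
  have := congrArg (fun (F : H →L[ℂ] H) => F x) h
  simpa using this

theorem embed_commute_mul {j k : ι} (hjk : j ≠ k) (Bj : Hs j →L[ℂ] Hs j)
    (Bk : Hs k →L[ℂ] Hs k) : Commute (T.embed j Bj) (T.embed k Bk) :=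
  commute_of_comp (embed_commute T hjk Bj Bk)

/-- The product over `F` of the single-factor operators `B j`. -/
def bigOp (B : ∀ j, Hs j →L[ℂ] Hs j) (F : Finset ι) : H →L[ℂ] H :=
  F.noncommProd (fun j => T.embed j (B j)) (by
    intro j hj k hk hjk
    exact embed_commute_mul T hjk (B j) (B k))

theorem bigOp_tmul (B : ∀ j, Hs j →L[ℂ] Hs j) (F : Finset ι) (y : ∀ j, Hs j) :
    bigOp T B F (T.tmul y) = T.tmul (fun j => if j ∈ F then B j (y j) else y j) := by
  induction F using Finset.induction_on with
  | empty => show (1 : H →L[ℂ] H) (T.tmul y) = _; simp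
  | @insert k F hkF ih =>
    have h1 : bigOp T B (insert k F) = T.embed k (B k) * bigOp T B F :=
      Finset.noncommProd_insert_of_notMem F k _ _ hkF
    rw [h1, ContinuousLinearMap.mul_apply, ih, T.embed_tmul]
    congr 1
    funext j
    by_cases hjk : j = k
    · subst hjk
      simp [hkF]
    · rw [Function.update_of_ne hjk]
      by_cases hjF : j ∈ F
      · simp [hjF, Finset.mem_insert_of_mem hjF]
      · have : j ∉ insert k F := by simp [Finset.mem_insert, hjk, hjF]
        simp [hjF, this]

theorem commute_bigOp {C : H →L[ℂ] H} (B : ∀ j, Hs j →L[ℂ] Hs j) (F : Finset ι)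
    (hC : ∀ j ∈ F, Commute C (T.embed j (B j))) : Commute C (bigOp T B F) :=
  Finset.noncommProd_commute _ _ _ _ hC

end BigOpSec

section CommutantClass

open ContinuousLinearMap

/-- Commutation theorem: an operator commuting with all the single-factor operators of
all factors `j ≠ i` is of the form `C₀ ⊗ I` for a bounded operator `C₀` on `Hs i`. -/
theorem exists_embed_of_commutes (i : ι) (hnt : ∀ j : ι, ∃ e : Hs j, ‖e‖ = 1)
    (C : H →L[ℂ] H)
    (hC : ∀ (j : ι), j ≠ i → ∀ B : Hs j →L[ℂ] Hs j, C ∘L T.embed j B = T.embed j B ∘L C) :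
    ∃ C₀ : Hs i →L[ℂ] Hs i, C = T.embed i C₀ := by
  choose a₀ ha₀' using hnt
  have ha₀ : ∀ j, j ≠ i → ‖a₀ j‖ = 1 := fun j _ => ha₀' j
  set ψ₀ := (psi T i a₀ ha₀).toContinuousLinearMap with hψ₀
  set C₀ := adjoint ψ₀ ∘L C ∘L ψ₀ with hC₀def
  refine ⟨C₀, ?_⟩
  -- C maps the range of any psi to itself
  have hinv : ∀ (aa : ∀ j, Hs j) (haa : ∀ j, j ≠ i → ‖aa j‖ = 1) (x : Hs i),
      (psi T i aa haa).toContinuousLinearMap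
        (adjoint (psi T i aa haa).toContinuousLinearMap (C ((psi T i aa haa) x)))
        = C ((psi T i aa haa) x) := by
    intro aa haa x
    apply psi_psi_adjoint_of_fixed T i aa haa
    intro j hj
    have h2 := congrArg (fun (F : H →L[ℂ] H) => F ((psi T i aa haa) x)) (hC j hj
      (rkOne (aa j) (aa j)))
    simp only [ContinuousLinearMap.comp_apply] at h2
    show T.embed j (rkOne (aa j) (aa j)) (C ((psi T i aa haa) x)) = C ((psi T i aa haa) x)
    rw [← h2, psi_fixed T i aa haa hj x]
  have hC₀apply : ∀ x : Hs i,
      C₀ x = adjoint ψ₀ (C ((psi T i a₀ ha₀) x)) := fun x => rfl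
  have hpsi0 : ∀ x : Hs i, C ((psi T i a₀ ha₀) x) = (psi T i a₀ ha₀) (C₀ x) := by
    intro x
    rw [hC₀apply x]
    exact (hinv a₀ ha₀ x).symm
  -- the key identity, for every admissible tuple aa
  have key : ∀ (aa : ∀ j, Hs j) (haa : ∀ j, j ≠ i → ‖aa j‖ = 1) (x : Hs i),
      C ((psi T i aa haa) x) = (psi T i aa haa) (C₀ x) := by
    intro aa haa x
    set V := bigOp T (fun j => rkOne (a₀ j) (aa j)) (Finset.univ \ {i}) with hVdef
    have hV : ∀ t : Hs i, V ((psi T i aa haa) t) = (psi T i a₀ ha₀) t := by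
      intro t
      rw [show ((psi T i aa haa) t : H) = T.tmul (Function.update aa i t) from rfl,
        hVdef, bigOp_tmul]
      rw [show ((psi T i a₀ ha₀) t : H) = T.tmul (Function.update a₀ i t) from rfl]
      congr 1
      funext j
      by_cases hj : j = i
      · subst hj
        have : j ∉ Finset.univ \ {j} := by simp
        simp
      · have hmem : j ∈ Finset.univ \ {i} := by simp [hj]
        rw [if_pos hmem, Function.update_of_ne hj, Function.update_of_ne hj, rkOne_apply,
          inner_self_eq_norm_sq_to_K, haa j hj]
        norm_num
    have hCV : Commute C V := by
      apply commute_bigOp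
      intro j hj
      have hji : j ≠ i := by
        rcases Finset.mem_sdiff.1 hj with ⟨_, h2⟩
        simpa using h2
      exact commute_of_comp (hC j hji _)
    have e1 : V (C ((psi T i aa haa) x)) = (psi T i a₀ ha₀) (C₀ x) := by
      have : V (C ((psi T i aa haa) x)) = C (V ((psi T i aa haa) x)) := by
        have := congrArg (fun (F : H →L[ℂ] H) => F ((psi T i aa haa) x)) hCV.symm.eq
        simpa using this
      rw [this, hV x, hpsi0 x]
    have e2 : V (C ((psi T i aa haa) x)) =
        (psi T i a₀ ha₀) (adjoint (psi T i aa haa).toContinuousLinearMap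
          (C ((psi T i aa haa) x))) := by
      conv_lhs => rw [← hinv aa haa x]
      exact hV _
    have e3 := e2.symm.trans e1
    have e4 := (psi T i a₀ ha₀).injective e3
    calc C ((psi T i aa haa) x)
        = (psi T i aa haa).toContinuousLinearMap
            (adjoint (psi T i aa haa).toContinuousLinearMap (C ((psi T i aa haa) x))) :=
          (hinv aa haa x).symm
      _ = (psi T i aa haa) (C₀ x) := by rw [show (adjoint (psi T i aa haa).toContinuousLinearMap (C ((psi T i aa haa) x))) = C₀ x from e4]; rfl
  -- conclude by density
  apply ext_tmul' T
  intro w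
  by_cases hw : ∀ j, j ≠ i → w j ≠ 0
  · set aa : ∀ j, Hs j := fun j => ((‖w j‖ : ℂ))⁻¹ • w j with haadef
    have haa : ∀ j, j ≠ i → ‖aa j‖ = 1 := by
      intro j hj
      rw [haadef]
      simp only [norm_smul, norm_inv, Complex.norm_real, norm_norm]
      field_simp [norm_ne_zero_iff.2 (hw j hj)]
    set c : ι → ℂ := fun j => if j = i then 1 else (‖w j‖ : ℂ) with hcdef
    have hcsmul : ∀ (t : Hs i), (fun j => c j • Function.update aa i t j) =
        Function.update w i t := by
      intro t
      funext j
      by_cases hj : j = i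
      · subst hj
        simp [hcdef]
      · rw [Function.update_of_ne hj, Function.update_of_ne hj, hcdef]
        simp only [if_neg hj, haadef]
        rw [smul_smul, mul_inv_cancel₀ (Complex.ofReal_ne_zero.2
          (norm_ne_zero_iff.2 (hw j hj))), one_smul]
    have hdec : ∀ (t : Hs i), T.tmul (Function.update w i t)
        = (∏ j, c j) • (psi T i aa haa) t := by
      intro t
      rw [← hcsmul t, T.tmul.map_smul_univ c (Function.update aa i t)]
      rfl
    have hw0 : T.tmul w = (∏ j, c j) • (psi T i aa haa) (w i) := by
      rw [← hdec (w i), Function.update_eq_self]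
    rw [T.embed_tmul, hw0, map_smul, key aa haa (w i), hdec (C₀ (w i))]
  · push_neg at hw
    obtain ⟨j, hj, hwj⟩ := hw
    have h0 : T.tmul w = 0 := by
      conv_lhs => rw [← Function.update_eq_self j w, hwj]
      exact T.tmul.map_update_zero w j
    rw [h0, map_zero, map_zero]

end CommutantClass


section AlgLemmas

open ContinuousLinearMap

theorem embed_zero (i : ι) : T.embed i (0 : Hs i →L[ℂ] Hs i) = 0 := by
  have h := embed_add T i 0 0
  simp only [add_zero] at h
  have := h.symm
  nth_rewrite 2 [h] at this
  exact (add_right_injective _ (by rw [← h, add_zero] : T.embed i 0 + 0 = T.embed i 0 + T.embed i 0)).symm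

theorem embed_mem_alg {S : Set ι} {i : ι} (hi : i ∈ S) (A : Hs i →L[ℂ] Hs i) :
    T.embed i A ∈ T.alg S := by
  rw [MultiTensor.alg, Set.mem_centralizer_iff]
  intro C hCC
  have hmem : T.embed i A ∈ ⋃ j ∈ S, Set.range (T.embed j) := by
    refine Set.mem_iUnion₂.2 ⟨i, hi, ⟨A, rfl⟩⟩
  exact (hCC _ hmem).symm

theorem alg_commute_embed {S : Set ι} {i : ι} (hi : i ∉ S) {P' : H →L[ℂ] H}
    (hP' : P' ∈ T.alg S) (A : Hs i →L[ℂ] Hs i) : Commute P' (T.embed i A) := by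
  have hmem : T.embed i A ∈ Set.centralizer (⋃ j ∈ S, Set.range (T.embed j)) := by
    rw [Set.mem_centralizer_iff]
    intro m hm
    rw [Set.mem_iUnion₂] at hm
    obtain ⟨j, hj, B, rfl⟩ := hm
    have hji : j ≠ i := fun h => hi (h ▸ hj)
    exact (embed_commute_mul T hji B A).eq
  exact (hP' _ hmem).symm

theorem exists_unit_embed_ne_zero (i : ι) {z : H} (hz : z ≠ 0) :
    ∃ e : Hs i, ‖e‖ = 1 ∧ T.embed i (rkOne e e) z ≠ 0 := by
  by_contra hcon
  push_neg at hcon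
  apply hz
  have hall : ∀ w : ∀ j, Hs j, ⟪z, T.tmul w⟫_ℂ = 0 := by
    intro w
    by_cases hwi : w i = 0
    · have h0 : T.tmul w = 0 := by
        conv_lhs => rw [← Function.update_eq_self i w, hwi]
        exact T.tmul.map_update_zero w i
      rw [h0, inner_zero_right]
    · set e : Hs i := ((‖w i‖ : ℂ))⁻¹ • w i with hedef
      have hne : ((‖w i‖ : ℂ)) ≠ 0 := Complex.ofReal_ne_zero.2 (norm_ne_zero_iff.2 hwi)
      have he1 : ‖e‖ = 1 := by
        rw [hedef]
        simp only [norm_smul, norm_inv, Complex.norm_real, norm_norm]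
        field_simp [norm_ne_zero_iff.2 hwi]
      have hfix : T.embed i (rkOne e e) (T.tmul w) = T.tmul w := by
        rw [T.embed_tmul, rkOne_apply]
        have h2 : ⟪e, w i⟫_ℂ = (‖w i‖ : ℂ) := by
          rw [hedef, inner_smul_left, inner_self_eq_norm_sq_to_K, Complex.conj_inv,
            Complex.conj_ofReal]
          first
          | (field_simp [hne]; rfl)
          | (field_simp [hne]; rfl)
        have h3 : (⟪e, w i⟫_ℂ) • e = w i := by
          rw [h2, hedef, smul_smul, mul_inv_cancel₀ hne, one_smul]
        rw [h3, Function.update_eq_self]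
      have hadj : adjoint (rkOne e e) = rkOne e e := rkOne_adjoint _ _
      calc ⟪z, T.tmul w⟫_ℂ = ⟪z, T.embed i (rkOne e e) (T.tmul w)⟫_ℂ := by rw [hfix]
        _ = ⟪T.embed i (rkOne e e) z, T.tmul w⟫_ℂ := inner_embed_sa T hadj _ _
        _ = 0 := by rw [hcon e he1, inner_zero_left]
  have hfun : innerSL ℂ z = 0 := by
    apply ext_tmul' T
    intro y
    simp only [innerSL_apply_apply, ContinuousLinearMap.zero_apply]
    exact hall y
  have := congrFun (congrArg (fun (f : H →L[ℂ] ℂ) => ⇑f) hfun) z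
  simp only [innerSL_apply_apply, ContinuousLinearMap.zero_apply] at this
  exact inner_self_eq_zero.1 this

theorem commute_orthProj {C : H →L[ℂ] H} {K : Submodule ℂ H} [K.HasOrthogonalProjection]
    (hCK : ∀ x ∈ K, C x ∈ K) (hCaK : ∀ x ∈ K, adjoint C x ∈ K) :
    Commute C (Kᗮ.subtypeL ∘L Submodule.orthogonalProjectionOnto Kᗮ) := by
  set P := Kᗮ.subtypeL ∘L Submodule.orthogonalProjectionOnto Kᗮ with hPdef
  have hPmem : ∀ x ∈ Kᗮ, P x = x := by
    intro x hx
    show (↑(Submodule.orthogonalProjectionOnto Kᗮ x) : H) = x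
    rw [Submodule.orthogonalProjectionOnto_mem_subspace_eq_self (⟨x, hx⟩ : Kᗮ)]
  have hPK : ∀ x ∈ K, P x = 0 := by
    intro x hx
    show (↑(Submodule.orthogonalProjectionOnto Kᗮ x) : H) = 0
    rw [Submodule.orthogonalProjectionOnto_apply_of_mem_orthogonal
      (Submodule.le_orthogonal_orthogonal K hx)]
    rfl
  have hCW : ∀ x ∈ Kᗮ, C x ∈ Kᗮ := by
    intro x hx
    rw [Submodule.mem_orthogonal]
    intro u hu
    rw [← ContinuousLinearMap.adjoint_inner_left]
    exact hx _ (hCaK u hu)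
  show C * P = P * C
  ext x
  have hdecomp : (↑(Submodule.orthogonalProjectionOnto K x) : H) + ↑(Submodule.orthogonalProjectionOnto Kᗮ x) = x :=
    Submodule.starProjection_add_starProjection_orthogonal (K := K) x
  set k : H := ↑(Submodule.orthogonalProjectionOnto K x)
  set w : H := ↑(Submodule.orthogonalProjectionOnto Kᗮ x)
  have hk : k ∈ K := Submodule.coe_mem _
  have hw : w ∈ Kᗮ := Submodule.coe_mem _
  have hPx : P x = w := by
    have h1 : P k = 0 := hPK k hk
    have h2 : P w = w := hPmem w hw
    calc P x = P (k + w) := by rw [hdecomp]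
      _ = P k + P w := map_add _ _ _
      _ = w := by rw [h1, h2, zero_add]
  have hCx : C x = C k + C w := by rw [← map_add, hdecomp]
  calc (C * P) x = C (P x) := rfl
    _ = C w := by rw [hPx]
    _ = P (C k) + P (C w) := by rw [hPK _ (hCK k hk), hPmem _ (hCW w hw), zero_add]
    _ = P (C x) := by rw [← map_add, ← hCx]
    _ = (P * C) x := rfl

theorem embed_isONProj (i : ι) {e : Hs i} (he : ‖e‖ = 1) :
    IsONProj (T.embed i (rkOne e e)) := by
  constructor
  · rw [IsSelfAdjoint, ContinuousLinearMap.star_eq_adjoint, embed_adjoint, rkOne_adjoint]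
  · rw [embed_comp, rkOne_comp, inner_self_eq_norm_sq_to_K, he]
    norm_num

end AlgLemmas


section MainDirections

open ContinuousLinearMap

set_option maxHeartbeats 1000000 in
/-- Backward direction: cyclicity for every factor implies hyperentanglement. -/
theorem hyper_of_cyclic (v : H)
    (hcyc : ∀ i, Dense (Set.range fun A : Hs i →L[ℂ] Hs i => T.embed i A v)) :
    T.Hyper v := by
  intro S S' hS hS' hdisj P' hP'alg hP'proj hP'ne ε hε
  obtain ⟨i, hiS'⟩ := hS'
  have hiS : i ∉ S := fun h => Set.disjoint_left.1 hdisj h hiS'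
  have hcomm : ∀ A : Hs i →L[ℂ] Hs i, Commute P' (T.embed i A) :=
    fun A => alg_commute_embed T hiS hP'alg A
  -- a unit vector fixed by `P'`
  obtain ⟨y, hy⟩ : ∃ y, P' y ≠ 0 := by
    by_contra h
    push_neg at h
    exact hP'ne (ContinuousLinearMap.ext fun u => by rw [h u]; rfl)
  set z : H := ((‖P' y‖ : ℂ))⁻¹ • P' y with hzdef
  have hz1 : ‖z‖ = 1 := norm_smul_inv_norm hy
  have hzfix : P' z = z := by
    rw [hzdef, map_smul]
    congr 1
    exact congrFun (congrArg (fun (g : H →L[ℂ] H) => ⇑g) hP'proj.2) y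
  have hzne : z ≠ 0 := by
    intro h
    rw [h, norm_zero] at hz1
    norm_num at hz1
  obtain ⟨e, he1, hene⟩ := exists_unit_embed_ne_zero T i hzne
  set z1 := T.embed i (rkOne e e) z with hz1def
  have hQQ : T.embed i (rkOne e e) ∘L T.embed i (rkOne e e) = T.embed i (rkOne e e) :=
    (embed_isONProj T i he1).2
  have hz1fix : P' z1 = z1 := by
    have h1 := congrFun (congrArg (fun (g : H →L[ℂ] H) => ⇑g) (hcomm (rkOne e e)).eq) z
    simp only [ContinuousLinearMap.mul_apply] at h1
    rw [hz1def, h1, hzfix]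
  have hz1fixQ : T.embed i (rkOne e e) z1 = z1 := by
    rw [hz1def, ← ContinuousLinearMap.comp_apply, hQQ]
  set zh : H := ((‖z1‖ : ℂ))⁻¹ • z1 with hzhdef
  have hzh1 : ‖zh‖ = 1 := norm_smul_inv_norm hene
  have hzhfix : P' zh = zh := by rw [hzhdef, map_smul, hz1fix]
  have hzhfixQ : T.embed i (rkOne e e) zh = zh := by rw [hzhdef, map_smul, hz1fixQ]
  -- the tolerance
  set δ : ℝ := min (1/2) (ε/4) with hδdef
  have hδ0 : 0 < δ := lt_min (by norm_num) (by linarith)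
  have hδh : δ ≤ 1/2 := min_le_left _ _
  have hδε : 4 * δ ≤ ε := by
    have := min_le_right (1/2 : ℝ) (ε/4)
    have h2 : δ ≤ ε/4 := by rw [hδdef]; exact this
    linarith
  -- approximate zh by a vector in the cyclic orbit
  obtain ⟨u, hu_mem, hu_dist⟩ := (hcyc i).exists_dist_lt zh hδ0
  obtain ⟨A, hA⟩ := hu_mem
  have happ : ‖T.embed i A v - zh‖ < δ := by
    have : T.embed i A v = u := hA
    rw [this, ← dist_eq_norm, dist_comm]
    exact hu_dist
  set f : Hs i := adjoint A e with hfdef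
  have hcompRk : rkOne e e ∘L A = rkOne e f := by
    ext x
    rw [ContinuousLinearMap.comp_apply, rkOne_apply, rkOne_apply, hfdef,
      ContinuousLinearMap.adjoint_inner_left]
  set w : H := T.embed i (rkOne e f) v with hwdef
  have hwz : ‖w - zh‖ < δ := by
    have h1 : w = T.embed i (rkOne e e) (T.embed i A v) := by
      rw [hwdef, ← hcompRk, ← embed_comp, ContinuousLinearMap.comp_apply]
    have h2 : w - zh = T.embed i (rkOne e e) (T.embed i A v - zh) := by
      rw [map_sub, ← h1, hzhfixQ]
    rw [h2]
    exact lt_of_le_of_lt ((embed_isONProj T i he1).norm_apply_le _) happ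
  have hfne : f ≠ 0 := by
    intro h0
    have hrk0 : rkOne e f = 0 := by
      rw [h0]
      ext x
      simp [rkOne_apply]
    have hw0 : w = 0 := by rw [hwdef, hrk0, embed_zero]; rfl
    rw [hw0, zero_sub, norm_neg, hzh1] at hwz
    linarith
  have hFpos : (0:ℝ) < ‖f‖ := norm_pos_iff.2 hfne
  have hFne : ((‖f‖ : ℂ)) ≠ 0 := Complex.ofReal_ne_zero.2 (ne_of_gt hFpos)
  set fh : Hs i := ((‖f‖ : ℂ))⁻¹ • f with hfhdef
  have hfh1 : ‖fh‖ = 1 := norm_smul_inv_norm hfne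
  set P : H →L[ℂ] H := T.embed i (rkOne fh fh) with hPdef
  have hPproj : IsONProj P := embed_isONProj T i hfh1
  have hRR : rkOne f e ∘L rkOne e f = ((‖f‖ : ℂ)^2) • rkOne fh fh := by
    rw [rkOne_comp, inner_self_eq_norm_sq_to_K, he1]
    norm_num
    ext x
    rw [rkOne_apply, ContinuousLinearMap.smul_apply, rkOne_apply, hfhdef, inner_smul_left,
      Complex.conj_inv, Complex.conj_ofReal, smul_smul, smul_smul]
    congr 1
    field_simp
  have hadj_w : ∀ t : H, ⟪w, t⟫_ℂ = ⟪v, T.embed i (rkOne f e) t⟫_ℂ := by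
    intro t
    rw [hwdef, show T.embed i (rkOne f e) = adjoint (T.embed i (rkOne e f)) by
      rw [embed_adjoint, rkOne_adjoint], ContinuousLinearMap.adjoint_inner_right]
  have hEE : T.embed i (rkOne f e) (T.embed i (rkOne e f) v) = ((‖f‖ : ℂ)^2) • P v := by
    rw [← ContinuousLinearMap.comp_apply, embed_comp, hRR, embed_smul, hPdef]
    rfl
  have k1 : ((‖w‖ : ℂ))^2 = ((‖f‖ : ℂ)^2) * ((‖P v‖ : ℂ))^2 := by
    calc ((‖w‖ : ℂ))^2 = ⟪w, w⟫_ℂ := (inner_self_eq_norm_sq_to_K w).symm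
      _ = ⟪v, T.embed i (rkOne f e) w⟫_ℂ := hadj_w w
      _ = ⟪v, ((‖f‖ : ℂ)^2) • P v⟫_ℂ := by rw [hwdef, hEE]
      _ = ((‖f‖ : ℂ)^2) * ⟪v, P v⟫_ℂ := inner_smul_right _ _ _
      _ = ((‖f‖ : ℂ)^2) * ((‖P v‖ : ℂ))^2 := by rw [hPproj.inner_self v]
  have k2 : ((‖P' w‖ : ℂ))^2 = ((‖f‖ : ℂ)^2) * ⟪v, P' (P v)⟫_ℂ := by
    calc ((‖P' w‖ : ℂ))^2 = ⟪w, P' w⟫_ℂ := (hP'proj.inner_self w).symm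
      _ = ⟪v, T.embed i (rkOne f e) (P' w)⟫_ℂ := hadj_w (P' w)
      _ = ⟪v, P' (T.embed i (rkOne f e) w)⟫_ℂ := by
          have h3 := congrFun (congrArg (fun (g : H →L[ℂ] H) => ⇑g) (hcomm (rkOne f e)).eq) w
          simp only [ContinuousLinearMap.mul_apply] at h3
          rw [h3]
      _ = ⟪v, P' (((‖f‖ : ℂ)^2) • P v)⟫_ℂ := by rw [hwdef, hEE]
      _ = ((‖f‖ : ℂ)^2) * ⟪v, P' (P v)⟫_ℂ := by rw [map_smul, inner_smul_right]
  have k3 : ⟪v, P' (P v)⟫_ℂ = ((‖P' (P v)‖ : ℂ))^2 := by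
    have hPv : P (P v) = P v := by
      have := congrFun (congrArg (fun (g : H →L[ℂ] H) => ⇑g) hPproj.2) v
      simpa using this
    have hswap : P' (P (P v)) = P (P' (P v)) := by
      have h3 := congrFun (congrArg (fun (g : H →L[ℂ] H) => ⇑g) (hcomm (rkOne fh fh)).eq) (P v)
      simp only [ContinuousLinearMap.mul_apply] at h3
      rw [hPdef]
      exact h3
    have hsa : adjoint (rkOne fh fh) = rkOne fh fh := rkOne_adjoint _ _
    calc ⟪v, P' (P v)⟫_ℂ = ⟪v, P' (P (P v))⟫_ℂ := by rw [hPv]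
      _ = ⟪v, P (P' (P v))⟫_ℂ := by rw [hswap]
      _ = ⟪P v, P' (P v)⟫_ℂ := by
          rw [hPdef]
          exact inner_embed_sa T hsa v _
      _ = ((‖P' (P v)‖ : ℂ))^2 := hP'proj.inner_self (P v)
  have r1 : ‖w‖^2 = ‖f‖^2 * ‖P v‖^2 := by exact_mod_cast k1
  have k2' : ((‖P' w‖ : ℂ))^2 = ((‖f‖ : ℂ)^2) * ((‖P' (P v)‖ : ℂ))^2 := by rw [k2, k3]
  have r2 : ‖P' w‖^2 = ‖f‖^2 * ‖P' (P v)‖^2 := by exact_mod_cast k2'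
  have rPv : (⟪v, P v⟫_ℂ).re = ‖P v‖^2 := by
    rw [hPproj.inner_self v, ← Complex.ofReal_pow]
    exact Complex.ofReal_re _
  have rP'Pv : (⟪v, P' (P v)⟫_ℂ).re = ‖P' (P v)‖^2 := by
    rw [k3, ← Complex.ofReal_pow]
    exact Complex.ofReal_re _
  -- norm bounds
  have hw_up : ‖w‖ ≤ 1 + δ := by
    have h1 : ‖w‖ ≤ ‖w - zh‖ + ‖zh‖ := by
      have := norm_add_le (w - zh) zh
      simpa using this
    rw [hzh1] at h1
    linarith
  have hP'w_lo : 1 - δ ≤ ‖P' w‖ := by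
    have h1 : P' w - zh = P' (w - zh) := by rw [map_sub, hzhfix]
    have h2 : ‖P' (w - zh)‖ ≤ ‖w - zh‖ := hP'proj.norm_apply_le _
    have h3 : ‖zh‖ - ‖P' w‖ ≤ ‖zh - P' w‖ := norm_sub_norm_le _ _
    have h4 : ‖zh - P' w‖ < δ := by
      rw [norm_sub_rev, h1]
      exact lt_of_le_of_lt h2 hwz
    rw [hzh1] at h3
    linarith
  have hw_lo : 1 - δ ≤ ‖w‖ := le_trans hP'w_lo (hP'proj.norm_apply_le w)
  have hPv_pos : 0 < ‖P v‖ := by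
    rcases lt_or_ge 0 ‖P v‖ with h | h
    · exact h
    · exfalso
      have h0 : ‖P v‖ = 0 := le_antisymm h (norm_nonneg _)
      have hsq : ‖w‖^2 = 0 := by rw [r1, h0]; ring
      have hw0 : ‖w‖ = 0 := by
        have := sq_eq_zero_iff.1 hsq
        exact this
      linarith
  refine ⟨P, embed_mem_alg T hiS' _, hPproj, ?_, ?_, ?_⟩
  · intro h0
    rw [h0] at hPv_pos
    simp at hPv_pos
  · rw [rPv]
    exact pow_pos hPv_pos 2
  · rw [rPv, rP'Pv]
    by_cases hε1 : 1 ≤ ε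
    · have h1 : (1 - ε) ≤ 0 := by linarith
      nlinarith [sq_nonneg ‖P' (P v)‖, pow_pos hPv_pos 2]
    · push_neg at hε1
      have hsq : (1 - ε) * ‖w‖^2 ≤ ‖P' w‖^2 := by
        have hb1 : (1-δ)^2 ≤ ‖P' w‖^2 := by nlinarith [hP'w_lo, hδh]
        have hb2 : ‖w‖^2 ≤ (1+δ)^2 := by nlinarith [hw_up, norm_nonneg w]
        have hb3 : (1-ε) * (1+δ)^2 ≤ (1-δ)^2 := by
          nlinarith [hδ0.le, hδε, hε.le, hε1.le, sq_nonneg δ, mul_nonneg hε.le hδ0.le]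
        have hb4 : (1-ε) * ‖w‖^2 ≤ (1-ε) * (1+δ)^2 :=
          mul_le_mul_of_nonneg_left hb2 (by linarith)
        linarith
      rw [r1, r2] at hsq
      have hf2 : (0:ℝ) < ‖f‖^2 := pow_pos hFpos 2
      nlinarith [hsq, hf2]

set_option maxHeartbeats 1000000 in
/-- Forward direction: a hyperentangled vector is cyclic for every factor. -/
theorem cyclic_of_hyper (hn : 1 < Fintype.card ι) (hnt : ∀ j : ι, ∃ e : Hs j, ‖e‖ = 1)
    (v : H) (hH : T.Hyper v) (i : ι) :
    Dense (Set.range fun A : Hs i →L[ℂ] Hs i => T.embed i A v) := by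
  by_contra hnd
  set L : (Hs i →L[ℂ] Hs i) →ₗ[ℂ] H :=
    { toFun := fun A => T.embed i A v
      map_add' := fun A B => by
        show T.embed i (A + B) v = T.embed i A v + T.embed i B v
        rw [embed_add T i A B]
        rfl
      map_smul' := fun c A => by
        show T.embed i (c • A) v = c • (T.embed i A v)
        rw [embed_smul T i c A]
        rfl } with hLdef
  have hranges : (Set.range fun A : Hs i →L[ℂ] Hs i => T.embed i A v)
      = ↑(LinearMap.range L) := by
    ext u
    constructor
    · rintro ⟨A, hA⟩
      exact ⟨A, hA⟩
    · rintro ⟨A, hA⟩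
      exact ⟨A, hA⟩
  set K := (LinearMap.range L).topologicalClosure with hKdef
  have hKclosed : IsClosed (K : Set H) := Submodule.isClosed_topologicalClosure _
  haveI : CompleteSpace K := hKclosed.completeSpace_coe
  haveI hKproj : Submodule.HasOrthogonalProjection K := inferInstance
  haveI : Submodule.HasOrthogonalProjection Kᗮ := inferInstance
  have hKtop : K ≠ ⊤ := by
    intro h
    apply hnd
    rw [hranges]
    exact Submodule.dense_iff_topologicalClosure_eq_top.2 h
  have hWbot : Kᗮ ≠ ⊥ := fun h => hKtop (Submodule.orthogonal_eq_bot_iff.1 h)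
  set P' : H →L[ℂ] H := Kᗮ.subtypeL ∘L Submodule.orthogonalProjectionOnto Kᗮ with hP'def
  have hP'mem : ∀ x ∈ Kᗮ, P' x = x := by
    intro x hx
    show (↑(Submodule.orthogonalProjectionOnto Kᗮ x) : H) = x
    rw [Submodule.orthogonalProjectionOnto_mem_subspace_eq_self (⟨x, hx⟩ : Kᗮ)]
  have hP'proj : IsONProj P' := by
    constructor
    · exact isSelfAdjoint_starProjection Kᗮ
    · ext x
      show P' (↑(Submodule.orthogonalProjectionOnto Kᗮ x)) = _
      rw [hP'mem _ (Submodule.coe_mem _)]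
      rfl
  have hP'ne : P' ≠ 0 := by
    obtain ⟨x, hxW, hxne⟩ := (Submodule.ne_bot_iff _).1 hWbot
    intro h
    apply hxne
    rw [← hP'mem x hxW, h]
    rfl
  have hP'v : P' v = 0 := by
    have hvK : v ∈ K := by
      apply Submodule.le_topologicalClosure
      refine ⟨1, ?_⟩
      show T.embed i 1 v = v
      rw [embed_id]
      rfl
    show (↑(Submodule.orthogonalProjectionOnto Kᗮ v) : H) = 0
    rw [Submodule.orthogonalProjectionOnto_apply_of_mem_orthogonal
      (Submodule.le_orthogonal_orthogonal K hvK)]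
    rfl
  have hP'alg : P' ∈ T.alg ({i}ᶜ) := by
    rw [MultiTensor.alg, Set.mem_centralizer_iff]
    intro C hC
    have hCcomm : ∀ (j : ι), j ≠ i → ∀ B : Hs j →L[ℂ] Hs j,
        C ∘L T.embed j B = T.embed j B ∘L C := by
      intro j hj B
      have hmem : T.embed j B ∈ ⋃ k ∈ ({i}ᶜ : Set ι), Set.range (T.embed k) :=
        Set.mem_iUnion₂.2 ⟨j, Set.mem_compl_singleton_iff.2 hj, ⟨B, rfl⟩⟩
      exact (hC _ hmem).symm
    obtain ⟨C₀, rfl⟩ := exists_embed_of_commutes T i hnt C hCcomm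
    have hmapsto : ∀ D : Hs i →L[ℂ] Hs i,
        Set.MapsTo (T.embed i D) ↑(LinearMap.range L) ↑(LinearMap.range L) := by
      intro D u hu
      obtain ⟨A, hA⟩ := hu
      have hA' : T.embed i A v = u := hA
      refine ⟨D ∘L A, ?_⟩
      show T.embed i (D ∘L A) v = _
      rw [← embed_comp, ContinuousLinearMap.comp_apply, hA']
    have hinv : ∀ (D : Hs i →L[ℂ] Hs i), ∀ x ∈ K, T.embed i D x ∈ K := by
      intro D x hx
      have h2 := (hmapsto D).closure (T.embed i D).continuous
      have hxcl : x ∈ closure (↑(LinearMap.range L) : Set H) := by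
        rw [← Submodule.topologicalClosure_coe]
        exact hx
      have := h2 hxcl
      rw [← Submodule.topologicalClosure_coe] at this
      exact this
    have hCK : ∀ x ∈ K, T.embed i C₀ x ∈ K := hinv C₀
    have hCaK : ∀ x ∈ K, adjoint (T.embed i C₀) x ∈ K := by
      intro x hx
      rw [embed_adjoint]
      exact hinv (adjoint C₀) x hx
    exact commute_orthProj hCK hCaK
  obtain ⟨j, hji⟩ := Fintype.exists_ne_of_one_lt_card hn i
  have hmax := hH ({i}ᶜ) {i} ⟨j, hji⟩ ⟨i, rfl⟩ disjoint_compl_left P' hP'alg hP'proj hP'ne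
    (1/2) (by norm_num)
  obtain ⟨P, _, _, _, hpos, hineq⟩ := hmax
  have hzero : ⟪v, P' (P v)⟫_ℂ = 0 := by
    have hsa : adjoint P' = P' := by
      rw [← ContinuousLinearMap.star_eq_adjoint]
      exact hP'proj.1
    calc ⟪v, P' (P v)⟫_ℂ = ⟪adjoint P' v, P v⟫_ℂ :=
          (ContinuousLinearMap.adjoint_inner_left P' (P v) v).symm
      _ = ⟪P' v, P v⟫_ℂ := by rw [hsa]
      _ = 0 := by rw [hP'v, inner_zero_left]
  rw [hzero] at hineq
  norm_num at hineq
  linarith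

end MainDirections

end Aux

/-- a unit vector `v ∈ H = H₁ ⊗ ⋯ ⊗ Hₙ` is hyperentangled if and only if for
every `i` the vector `v` is `{i}`-cyclic, i.e. `{(A ⊗ I) v : A bounded on Hs i}` is dense in
`H`. -/
theorem hyper_iff_forall_singleton_cyclic
    [∀ i, TopologicalSpace.SeparableSpace (Hs i)]
    (hn : 1 < Fintype.card ι) (hdim : ∀ i, 1 < Module.rank ℂ (Hs i))
    (T : MultiTensor ι Hs H) (v : H) (hv : ‖v‖ = 1) :
    T.Hyper v ↔ ∀ i, Dense (Set.range fun A : Hs i →L[ℂ] Hs i => T.embed i A v) := by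
  have hnt : ∀ j : ι, ∃ e : Hs j, ‖e‖ = 1 := by
    intro j
    have hnontriv : Nontrivial (Hs j) := by
      rcases subsingleton_or_nontrivial (Hs j) with hsub | h
      · exfalso
        have h0 := hdim j
        rw [rank_subsingleton' ℂ (Hs j)] at h0
        exact absurd h0 (by simp)
      · exact h
    obtain ⟨e, he⟩ := exists_ne (0 : Hs j)
    exact ⟨((‖e‖ : ℂ))⁻¹ • e, norm_smul_inv_norm he⟩
  constructor
  · intro hH i
    exact cyclic_of_hyper T hn hnt v hH i
  · intro hcyc
    exact hyper_of_cyclic T v hcyc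

end
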